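/- Let L be a finite distributive strong upper semilattice that is locally principal: there is a set A of elements, each minimal in L, such that every x ∈ L lies above some a ∈ A (∀ x, ∃ a ∈ A, a ≤ x). Then the canonical map ι : L → V(L) is injective. -/

import Mathlib

/-- A strong upper semilattice: any two elements with a common lower bound
have a greatest lower bound. -/
def StrongUpper (L : Type*) [SemilatticeSup L] : Prop :=
  ∀ x y : L, (∃ z, z ≤ x ∧ z ≤ y) → ∃ w, IsGLB {x, y} w

/-- Every interval is a distributive lattice. -/
def IntervalDistrib (L : Type*) [SemilatticeSup L] : Prop :=
  ∀ a x y z w w' : L, a ≤ x → a ≤ y → a ≤ z →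
    IsGLB {x, y} w → IsGLB {x ⊔ z, y ⊔ z} w' → w' = w ⊔ z

/-- Meet-irreducible element. -/
def MeetIrred {L : Type*} [SemilatticeSup L] [OrderTop L] (m : L) : Prop :=
  m ≠ ⊤ ∧ ∀ p q : L, IsGLB {p, q} m → m = p ∨ m = q

/-- The subgroup of relations defining the valuation ring of `L`. -/
def MRel (L : Type*) [SemilatticeSup L] : AddSubgroup (FreeAbelianGroup L) :=
  AddSubgroup.closure
    {g : FreeAbelianGroup L | ∃ x y z w : L, IsGLB {x ⊔ z, y ⊔ z} w ∧
      g = FreeAbelianGroup.of (x ⊔ y ⊔ z) + FreeAbelianGroup.of w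
        - FreeAbelianGroup.of (x ⊔ z) - FreeAbelianGroup.of (y ⊔ z)}

/-- The valuation ring (as an additive group) of `L`. -/
abbrev VRing (L : Type*) [SemilatticeSup L] : Type _ :=
  FreeAbelianGroup L ⧸ MRel L

/-- The universal valuation `ι : L → V(L)`. -/
def iota {L : Type*} [SemilatticeSup L] (l : L) : VRing L :=
  QuotientAddGroup.mk (FreeAbelianGroup.of l)

/-- A valuation on `L` with values in an additive commutative group `G`. -/
def IsValuation {L : Type*} [SemilatticeSup L] {G : Type*} [AddCommGroup G]
    (f : L → G) : Prop :=
  ∀ x y z w : L, IsGLB {x ⊔ z, y ⊔ z} w →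
    f (x ⊔ y ⊔ z) + f w = f (x ⊔ z) + f (y ⊔ z)

private lemma valuation_eq_of_iota_eq {L : Type*} [SemilatticeSup L]
    {s t : L} (h : iota s = iota t) (f : L → ℤ) (hfv : IsValuation f) :
    f s = f t := by
  have hmem : -(FreeAbelianGroup.of s) + FreeAbelianGroup.of t ∈ MRel L :=
    (QuotientAddGroup.eq).mp h
  set F := FreeAbelianGroup.lift f with hF
  have hker : MRel L ≤ F.ker := by
    rw [MRel, AddSubgroup.closure_le]
    rintro g ⟨x, y, z, w, hglb, rfl⟩
    have hv := hfv x y z w hglb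
    simp only [SetLike.mem_coe, AddMonoidHom.mem_ker, map_sub, map_add, hF,
      FreeAbelianGroup.lift_apply_of]
    linarith
  have hz := hker hmem
  simp only [AddMonoidHom.mem_ker, map_add, map_neg, hF,
    FreeAbelianGroup.lift_apply_of] at hz
  linarith

private lemma iota_aux {L : Type*} [SemilatticeSup L] [Finite L]
    (hS : StrongUpper L) (hD : IntervalDistrib L)
    (s t : L) (h : iota s = iota t) (hts : ¬ t ≤ s) : False := by
  classical
  have hfin : ({u : L | s ≤ u ∧ ¬ t ≤ u} : Set L).Finite := Set.toFinite _
  obtain ⟨m, hm, hmax⟩ : ∃ m ∈ {u : L | s ≤ u ∧ ¬ t ≤ u},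
      ∀ p ∈ {u : L | s ≤ u ∧ ¬ t ≤ u}, m ≤ p → m = p := by
    obtain ⟨m, hm⟩ := hfin.exists_maximal ⟨s, le_refl s, hts⟩
    exact ⟨m, hm.1, fun p hp hmp => hm.eq_of_le hp hmp⟩
  have hmax' : ∀ p, m ≤ p → ¬ t ≤ p → m = p := fun p hmp htp =>
    hmax p ⟨le_trans hm.1 hmp, htp⟩ hmp
  set f : L → ℤ := fun u => if u ≤ m then 1 else 0 with hf
  have hval : IsValuation f := by
    intro x y z w hw
    have hw1 : w ≤ x ⊔ z := hw.1 (by simp)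
    have hw2 : w ≤ y ⊔ z := hw.1 (by simp)
    have hxz : x ⊔ z ≤ x ⊔ y ⊔ z := sup_le (le_sup_of_le_left le_sup_left) le_sup_right
    have hyz : y ⊔ z ≤ x ⊔ y ⊔ z := sup_le (le_sup_of_le_left le_sup_right) le_sup_right
    by_cases h1 : x ⊔ z ≤ m <;> by_cases h2 : y ⊔ z ≤ m
    · have hxyzm : x ⊔ y ⊔ z ≤ m :=
        sup_le (sup_le (le_sup_left.trans h1) (le_sup_left.trans h2)) (le_sup_right.trans h1)
      simp [hf, hxyzm, hw1.trans h1, h1, h2]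
    · have hxyzm : ¬ x ⊔ y ⊔ z ≤ m := fun hc => h2 (hyz.trans hc)
      simp [hf, hxyzm, hw1.trans h1, h1, h2]
    · have hxyzm : ¬ x ⊔ y ⊔ z ≤ m := fun hc => h1 (hxz.trans hc)
      simp [hf, hxyzm, hw2.trans h2, h1, h2]
    · have hxyzm : ¬ x ⊔ y ⊔ z ≤ m := fun hc => h1 (hxz.trans hc)
      have hwm : ¬ w ≤ m := by
        intro hwm
        obtain ⟨w', hw'⟩ := hS (x ⊔ z ⊔ m) (y ⊔ z ⊔ m)
          ⟨w, le_sup_of_le_left hw1, le_sup_of_le_left hw2⟩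
        have hw'm : w' = m := by
          have := hD w (x ⊔ z) (y ⊔ z) m w w' hw1 hw2 hwm hw hw'
          rw [this, sup_eq_right.mpr hwm]
        have ht1 : t ≤ x ⊔ z ⊔ m := by
          by_contra hc
          exact h1 (le_sup_left.trans (hmax' _ le_sup_right hc).ge)
        have ht2 : t ≤ y ⊔ z ⊔ m := by
          by_contra hc
          exact h2 (le_sup_left.trans (hmax' _ le_sup_right hc).ge)
        have : t ≤ w' := hw'.2 (by rintro u (rfl | rfl) <;> simp_all)
        exact hm.2 (hw'm ▸ this)
      simp [hf, hxyzm, hwm, h1, h2]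
  have := valuation_eq_of_iota_eq h f hval
  simp [hf, hm.1, hm.2] at this

theorem iota_injective_of_locally_principal {L : Type*} [SemilatticeSup L] [OrderTop L]
    [Finite L] (hS : StrongUpper L) (hD : IntervalDistrib L)
    (A : Set L) (hA : ∀ a ∈ A, IsMin a) (hcov : ∀ x : L, ∃ a ∈ A, a ≤ x) :
    Function.Injective (iota (L := L)) := by
  intro s t h
  by_contra hne
  rcases (not_and_or.mp fun hc => hne (le_antisymm hc.1 hc.2)) with hst | hts
  · exact iota_aux hS hD t s h.symm hst
  · exact iota_aux hS hD s t h hts
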